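/- arXiv:1810.03144 — 2 statements merged into one kernel-verified Lean document; each statement's English description precedes it below -/
import Mathlib

section
/- Let λ > 0, α > 0 and let n be a positive integer. Then for all t > 0, the n-th derivative of the function t ↦ E_{α,1}(−λ t^α) equals −λ t^{α−n} E_{α,α−n+1}(−λ t^α). -/
/-- The Mittag--Leffler function `E_{α,β}(z) = ∑_{k=0}^∞ z^k / Γ(kα + β)`. -/
noncomputable def mittagLeffler (α β z : ℝ) : ℝ :=
  ∑' k : ℕ, z ^ k / Real.Gamma (k * α + β)

open Real Filter Nat


set_option maxHeartbeats 1000000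

private lemma aux_summable {α : ℝ} (hα : 0 < α) (c x : ℝ) (hx : 0 ≤ x) :
    Summable (fun k : ℕ => (k + 1) * x ^ k / |Real.Gamma (k * α + c)|) := by
  refine Summable.of_norm_bounded_eventually_nat (g := fun k => (1/2 : ℝ) ^ k)
    (summable_geometric_of_lt_one (by norm_num) (by norm_num)) ?_
  set z : ℝ := 4 * x + 2 with hzdef
  have hz0 : (0:ℝ) ≤ z := by positivity
  have hz2 : (2:ℝ) ≤ z := by simp only [hzdef]; linarith
  set y : ℝ := z ^ (2 / α) with hydef
  have hy1 : (1:ℝ) ≤ y := Real.one_le_rpow (by linarith) (by positivity)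
  have hyz : ∀ w : ℝ, y ^ (w * (α / 2)) = z ^ w := by
    intro w
    rw [hydef, ← Real.rpow_mul hz0]
    congr 1
    field_simp
  -- eventual facts
  have hlin : Tendsto (fun k : ℕ => (k : ℝ) * α + c) atTop atTop :=
    (tendsto_natCast_atTop_atTop.atTop_mul_const hα).atTop_add tendsto_const_nhds
  have hE1 : ∀ᶠ k : ℕ in atTop, 2 ≤ (k : ℝ) * α + c := hlin.eventually_ge_atTop 2
  have hE2 : ∀ᶠ k : ℕ in atTop, 2 - c ≤ (k : ℝ) * (α / 2) := by
    have : Tendsto (fun k : ℕ => (k : ℝ) * (α / 2)) atTop atTop :=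
      tendsto_natCast_atTop_atTop.atTop_mul_const (by linarith)
    exact this.eventually_ge_atTop _
  have hE3 : ∀ᶠ m : ℕ in atTop, y ^ m ≤ (m ! : ℝ) := by
    have h0 := (Real.summable_pow_div_factorial y).tendsto_atTop_zero
    filter_upwards [h0.eventually_lt_const (by norm_num : (0:ℝ) < 1)] with m hm
    have hfac : (0:ℝ) < (m ! : ℝ) := by positivity
    have := (div_lt_one hfac).mp hm
    linarith
  have hM : Tendsto (fun k : ℕ => ⌊(k : ℝ) * α + c⌋₊ - 1) atTop atTop := by
    refine tendsto_atTop_atTop.mpr fun b => ?_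
    obtain ⟨K, hK⟩ := (tendsto_atTop_atTop.mp hlin) (b + 2)
    exact ⟨K, fun k hk => by
      have h1 := hK k hk
      have h2 : (b + 1 : ℕ) ≤ ⌊(k : ℝ) * α + c⌋₊ := Nat.le_floor (by push_cast; linarith)
      omega⟩
  filter_upwards [hE1, hE2, hM.eventually hE3] with k h1 h2 h3
  set m : ℕ := ⌊(k : ℝ) * α + c⌋₊ with hmdef
  have hm2 : 2 ≤ m := Nat.le_floor (by exact_mod_cast h1)
  have hmle : (m : ℝ) ≤ (k : ℝ) * α + c := Nat.floor_le (by linarith)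
  have hmgt : (k : ℝ) * α + c < m + 1 := Nat.lt_floor_add_one _
  have hcast : ((m - 1 : ℕ) : ℝ) = (m : ℝ) - 1 := by
    have : 1 ≤ m := by omega
    push_cast [this]; ring
  -- Gamma lower bound
  have hgam1 : Real.Gamma ((m : ℝ)) ≤ Real.Gamma ((k : ℝ) * α + c) := by
    rcases eq_or_lt_of_le hmle with h | h
    · rw [h]
    · exact le_of_lt (Real.Gamma_strictMonoOn_Ici (Set.mem_Ici.mpr (by exact_mod_cast hm2)) (Set.mem_Ici.mpr h1) h)
  have hgamfac : Real.Gamma ((m : ℝ)) = ((m - 1)! : ℝ) := by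
    have : ((m : ℝ)) = ((m - 1 : ℕ) : ℝ) + 1 := by rw [hcast]; ring
    rw [this, Real.Gamma_nat_eq_factorial]
  -- chain of inequalities
  have key : (k + 1 : ℝ) * x ^ k * 2 ^ k ≤ Real.Gamma ((k : ℝ) * α + c) := by
    have s1 : (k + 1 : ℝ) * x ^ k * 2 ^ k ≤ z ^ k := by
      calc (k + 1 : ℝ) * x ^ k * 2 ^ k ≤ 2 ^ k * x ^ k * 2 ^ k := by
            have : (k + 1 : ℝ) ≤ 2 ^ k := by exact_mod_cast Nat.succ_le_of_lt (Nat.lt_two_pow_self (n := k))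
            gcongr
        _ = (4 * x) ^ k := by
            rw [mul_pow, show (4:ℝ) = 2 * 2 by norm_num, mul_pow]; ring
        _ ≤ z ^ k := pow_le_pow_left₀ (by positivity) (by simp only [hzdef]; linarith) k
    have s2 : (z : ℝ) ^ k ≤ y ^ (m - 1 : ℕ) := by
      have e1 : (z : ℝ) ^ k = y ^ ((k : ℝ) * (α / 2)) := by
        rw [hyz (k : ℝ), Real.rpow_natCast]
      have e2 : y ^ ((m - 1 : ℕ) : ℝ) = y ^ (m - 1 : ℕ) := Real.rpow_natCast y _
      rw [e1, ← e2]
      apply Real.rpow_le_rpow_of_exponent_le hy1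
      rw [hcast]
      linarith
    have s3 : (y : ℝ) ^ (m - 1 : ℕ) ≤ ((m - 1)! : ℝ) := h3
    calc (k + 1 : ℝ) * x ^ k * 2 ^ k ≤ y ^ (m - 1 : ℕ) := s1.trans s2
      _ ≤ ((m - 1)! : ℝ) := s3
      _ = Real.Gamma ((m : ℝ)) := hgamfac.symm
      _ ≤ _ := hgam1
  have hgpos : 0 < Real.Gamma ((k : ℝ) * α + c) := Real.Gamma_pos_of_pos (by linarith)
  rw [Real.norm_eq_abs, abs_of_nonneg (by positivity), abs_of_pos hgpos,
    div_le_iff₀ hgpos]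
  calc (k + 1 : ℝ) * x ^ k = ((k + 1 : ℝ) * x ^ k * 2 ^ k) * (1/2) ^ k := by
        rw [mul_assoc, ← mul_pow]; norm_num
    _ ≤ Real.Gamma ((k : ℝ) * α + c) * (1/2) ^ k := by
        apply mul_le_mul_of_nonneg_right key (by positivity)
    _ = (1/2) ^ k * Real.Gamma ((k : ℝ) * α + c) := mul_comm _ _

private noncomputable def mlAux (α lam : ℝ) (m : ℕ) (s : ℝ) : ℝ :=
  ∑' k : ℕ, (-lam) ^ k * s ^ ((k : ℝ) * α - m) / Real.Gamma ((k : ℝ) * α - m + 1)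

private lemma ml_term_bound {α lam : ℝ} (hα : 0 < α) (m : ℕ) {s y : ℝ} (hy : 0 < y) (hyle : y ≤ s) :
    ∀ k : ℕ, ‖(-lam) ^ k * y ^ ((k : ℝ) * α - m) / Real.Gamma ((k : ℝ) * α - m + 1)‖
      ≤ y ^ (-(m : ℝ)) * ((k + 1) * (|lam| * s ^ α) ^ k / |Real.Gamma ((k : ℝ) * α + (1 - (m : ℝ)))|) := by
  intro k
  have hs : 0 < s := lt_of_lt_of_le hy hyle
  have harg : (k : ℝ) * α - m + 1 = (k : ℝ) * α + (1 - (m : ℝ)) := by ring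
  have hexp : (k : ℝ) * α - m = α * (k : ℝ) + (-(m : ℝ)) := by ring
  rw [harg, hexp, Real.rpow_add hy, Real.rpow_mul hy.le, Real.rpow_natCast]
  rw [norm_div, norm_mul, norm_pow, Real.norm_eq_abs, Real.norm_eq_abs, Real.norm_eq_abs,
    abs_neg]
  rw [mul_div_assoc']
  rcases eq_or_lt_of_le (abs_nonneg (Real.Gamma ((k : ℝ) * α + (1 - (m : ℝ))))) with hG | hG
  · rw [← hG, div_zero, div_zero]
  refine (div_le_div_iff_of_pos_right hG).mpr ?_
  have h1 : |((y:ℝ) ^ α) ^ k * y ^ (-(m:ℝ))| = (y ^ α) ^ k * y ^ (-(m:ℝ)) := by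
    apply abs_of_nonneg; positivity
  rw [h1]
  calc |lam| ^ k * ((y ^ α) ^ k * y ^ (-(m:ℝ)))
      ≤ |lam| ^ k * ((s ^ α) ^ k * y ^ (-(m:ℝ))) := by
        have hb : (y:ℝ) ^ α ≤ s ^ α := Real.rpow_le_rpow hy.le hyle hα.le
        gcongr
    _ ≤ (k + 1) * (|lam| ^ k * ((s ^ α) ^ k * y ^ (-(m:ℝ)))) := by
        apply le_mul_of_one_le_left (by positivity)
        have : (0:ℝ) ≤ (k:ℝ) := Nat.cast_nonneg k
        linarith
    _ = y ^ (-(m:ℝ)) * ((k + 1) * (|lam| * s ^ α) ^ k) := by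
        rw [mul_pow]; ring

private lemma mlAux_summable {α lam : ℝ} (hα : 0 < α) (m : ℕ) {s : ℝ} (hs : 0 < s) :
    Summable (fun k : ℕ =>
      (-lam) ^ k * s ^ ((k : ℝ) * α - m) / Real.Gamma ((k : ℝ) * α - m + 1)) := by
  exact Summable.of_norm_bounded
    ((aux_summable hα (1 - (m : ℝ)) (|lam| * s ^ α) (by positivity)).mul_left _)
    (ml_term_bound hα m hs le_rfl)

private lemma mlAux_hasDerivAt {α lam : ℝ} (hα : 0 < α) (m : ℕ) {s : ℝ} (hs : 0 < s) :
    HasDerivAt (mlAux α lam m) (mlAux α lam (m + 1) s) s := by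
  have hdiv : ∀ x : ℝ, x / Real.Gamma (x + 1) = 1 / Real.Gamma x := by
    intro x
    rcases eq_or_ne x 0 with h | h
    · simp [h, Real.Gamma_zero, Real.Gamma_one]
    · rw [Real.Gamma_add_one h, div_mul_eq_div_div, div_self h]
  set g : ℕ → ℝ → ℝ := fun k y =>
    (-lam) ^ k * y ^ ((k : ℝ) * α - m) / Real.Gamma ((k : ℝ) * α - m + 1) with hgdef
  set g' : ℕ → ℝ → ℝ := fun k y =>
    (-lam) ^ k * (((k : ℝ) * α - m) * y ^ ((k : ℝ) * α - m - 1)) /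
      Real.Gamma ((k : ℝ) * α - m + 1) with hg'def
  have hmem : s ∈ Set.Ioo (s / 2) (2 * s) := ⟨half_lt_self hs, by linarith⟩
  have hder : HasDerivAt (fun z => ∑' k, g k z) (∑' k, g' k s) s := by
    apply hasDerivAt_tsum_of_isPreconnected (g := g) (g' := g')
      (u := fun k : ℕ => ((α + m) * (s / 2) ^ (-((m : ℝ) + 1))) *
        (((k : ℝ) + 1) * (|lam| * (2 * s) ^ α) ^ k / |Real.Gamma ((k : ℝ) * α + (1 - (m : ℝ)))|))
      ((aux_summable hα (1 - (m : ℝ)) (|lam| * (2 * s) ^ α) (by positivity)).mul_left _)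
      isOpen_Ioo ((convex_Ioo _ _).isPreconnected) ?_ ?_ hmem (mlAux_summable hα m hs) hmem
    · -- termwise derivatives
      intro k y hy
      have hy0 : 0 < y := lt_trans (half_pos hs) hy.1
      exact ((Real.hasDerivAt_rpow_const (p := (k : ℝ) * α - m)
        (Or.inl hy0.ne')).const_mul ((-lam) ^ k)).div_const _
    · -- uniform bound
      intro k y hy
      have hy0 : 0 < y := lt_trans (half_pos hs) hy.1
      have h1 : |(k : ℝ) * α - m| ≤ (k + 1) * (α + m) := by
        have h1a : |(k : ℝ) * α - m| ≤ (k : ℝ) * α + m := by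
          calc |(k : ℝ) * α - m| ≤ |(k : ℝ) * α| + |(m : ℝ)| := abs_sub _ _
            _ = (k : ℝ) * α + m := by
              rw [abs_of_nonneg (by positivity), abs_of_nonneg (by positivity)]
        nlinarith [Nat.cast_nonneg (α := ℝ) k, Nat.cast_nonneg (α := ℝ) m, hα.le]
      have h2 : y ^ ((k : ℝ) * α - m - 1)
          ≤ ((2 * s) ^ α) ^ k * (s / 2) ^ (-((m : ℝ) + 1)) := by
        have e : (k : ℝ) * α - m - 1 = α * (k : ℝ) + (-((m : ℝ) + 1)) := by ring
        rw [e, Real.rpow_add hy0, Real.rpow_mul hy0.le, Real.rpow_natCast]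
        exact mul_le_mul
          (pow_le_pow_left₀ (Real.rpow_nonneg hy0.le α)
            (Real.rpow_le_rpow hy0.le hy.2.le hα.le) k)
          (Real.rpow_le_rpow_of_nonpos (half_pos hs) hy.1.le (neg_nonpos.mpr (by positivity)))
          (Real.rpow_nonneg hy0.le _) (by positivity)
      simp only [hg'def, norm_div, norm_mul, norm_pow, Real.norm_eq_abs, abs_neg]
      have harg : (k : ℝ) * α - m + 1 = (k : ℝ) * α + (1 - (m : ℝ)) := by ring
      rw [harg]
      rcases eq_or_lt_of_le (abs_nonneg (Real.Gamma ((k : ℝ) * α + (1 - (m : ℝ))))) with hG | hG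
      · rw [← hG, div_zero, div_zero, mul_zero]
      have hay : |y ^ ((k : ℝ) * α - m - 1)| = y ^ ((k : ℝ) * α - m - 1) :=
        abs_of_nonneg (Real.rpow_nonneg hy0.le _)
      rw [← mul_div_assoc, hay]
      refine (div_le_div_iff_of_pos_right hG).mpr ?_
      calc |lam| ^ k * (|(k : ℝ) * α - m| * y ^ ((k : ℝ) * α - m - 1))
          ≤ |lam| ^ k * (((k + 1) * (α + m)) *
              (((2 * s) ^ α) ^ k * (s / 2) ^ (-((m : ℝ) + 1)))) := by
            gcongr
        _ = (α + m) * (s / 2) ^ (-((m : ℝ) + 1)) * ((k + 1) * (|lam| * (2 * s) ^ α) ^ k) := by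
            rw [mul_pow]; ring
  have htsum : ∑' k, g' k s = mlAux α lam (m + 1) s := by
    unfold mlAux
    refine tsum_congr fun k => ?_
    have e1 : (k : ℝ) * α - ((m : ℕ) + 1 : ℕ) + 1 = (k : ℝ) * α - m := by push_cast; ring
    have e2 : (k : ℝ) * α - (((m : ℕ) + 1 : ℕ) : ℝ) = (k : ℝ) * α - m - 1 := by push_cast; ring
    rw [e1, e2]
    simp only [hg'def]
    rw [mul_div_assoc, mul_comm ((k : ℝ) * α - (m : ℝ)) (s ^ ((k : ℝ) * α - m - 1)),
      mul_div_assoc, hdiv, mul_one_div, ← mul_div_assoc]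
  rw [← htsum]
  exact hder

private lemma mlAux_eq_ml {α lam : ℝ} {s : ℝ} (hs : 0 < s) :
    mittagLeffler α 1 (-lam * s ^ α) = mlAux α lam 0 s := by
  unfold mittagLeffler mlAux
  refine tsum_congr fun k => ?_
  rw [Nat.cast_zero, sub_zero, mul_pow, ← Real.rpow_natCast (s ^ α) k,
    ← Real.rpow_mul hs.le, mul_comm α (k : ℝ)]

private lemma mlAux_iteratedDeriv {α lam : ℝ} (hα : 0 < α) (m : ℕ) :
    ∀ {t : ℝ}, 0 < t → iteratedDeriv m (mlAux α lam 0) t = mlAux α lam m t := by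
  induction m with
  | zero => intro t _; rw [iteratedDeriv_zero]
  | succ m ih =>
    intro t ht
    rw [iteratedDeriv_succ]
    have hev : iteratedDeriv m (mlAux α lam 0) =ᶠ[nhds t] mlAux α lam m := by
      filter_upwards [Ioi_mem_nhds ht] with s hs
      exact ih hs
    rw [hev.deriv_eq]
    exact (mlAux_hasDerivAt hα m ht).deriv

theorem mittagLeffler_iteratedDeriv (α lam : ℝ) (hα : 0 < α) (hlam : 0 < lam)
    (n : ℕ) (hn : 0 < n) (t : ℝ) (ht : 0 < t) :
    iteratedDeriv n (fun s : ℝ => mittagLeffler α 1 (-lam * s ^ α)) t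
      = -lam * t ^ (α - n) * mittagLeffler α (α - n + 1) (-lam * t ^ α) := by
  have hev : (fun s : ℝ => mittagLeffler α 1 (-lam * s ^ α)) =ᶠ[nhds t] mlAux α lam 0 := by
    filter_upwards [Ioi_mem_nhds ht] with s hs
    exact mlAux_eq_ml hs
  rw [hev.iteratedDeriv_eq n, mlAux_iteratedDeriv hα n ht]
  unfold mlAux mittagLeffler
  rw [Summable.tsum_eq_zero_add (by exact_mod_cast mlAux_summable hα n ht)]
  have h0 : ((0 : ℕ) : ℝ) * α - n + 1 = -(((n - 1 : ℕ) : ℝ)) := by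
    rw [Nat.cast_sub hn]
    push_cast
    ring
  rw [h0, Real.Gamma_neg_nat_eq_zero, div_zero, zero_add, ← tsum_mul_left]
  refine tsum_congr fun k => ?_
  have e1 : ((k + 1 : ℕ) : ℝ) * α - n + 1 = (k : ℝ) * α + (α - n + 1) := by push_cast; ring
  have e2 : ((k + 1 : ℕ) : ℝ) * α - n = (α - n) + α * (k : ℝ) := by push_cast; ring
  rw [e1, e2, Real.rpow_add ht, Real.rpow_mul ht.le, Real.rpow_natCast, mul_pow]
  ring
end

section
/- Let 1/2 < α < 1, T > 0 and λ₁ > 0. Then there exists a constant C > 0, depending only on α, T and λ₁, such that for every λ ≥ λ₁, ∫_0^T τ^{2α−2} [E_{α,α}(−λ τ^α)]² dτ ≥ C λ^{−2}. -/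
open Real Set MeasureTheory

lemma myGamma_ge (n : ℕ) (t : ℝ) (ht : 2 + n ≤ t) : ((n+1).factorial : ℝ) ≤ Real.Gamma t := by
  have h2 : (2:ℝ) ≤ 2 + n := le_add_of_nonneg_right (Nat.cast_nonneg n)
  have heq : Real.Gamma (2 + n) = ((n+1).factorial : ℝ) := by
    rw [show (2:ℝ) + n = ((n+1:ℕ):ℝ) + 1 by push_cast; ring, Real.Gamma_nat_eq_factorial]
  rw [← heq]
  rcases eq_or_lt_of_le ht with h | h
  · rw [h]
  · exact (Real.Gamma_strictMonoOn_Ici (mem_Ici.mpr h2) (mem_Ici.mpr (h2.trans ht)) h).le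

lemma mySummable (α : ℝ) (hα0 : 1/2 < α) (x : ℝ) :
    Summable (fun k : ℕ => x ^ k / Real.Gamma (k * α + α)) := by
  have hαpos : 0 < α := by linarith
  have hΓpos : ∀ k : ℕ, 0 < Real.Gamma ((k:ℝ) * α + α) := fun k =>
    Real.Gamma_pos_of_pos (by positivity)
  apply Summable.of_abs
  have habs : ∀ k : ℕ, |x ^ k / Real.Gamma ((k:ℝ) * α + α)| = |x| ^ k / Real.Gamma ((k:ℝ) * α + α) := by
    intro k
    rw [abs_div, abs_pow, abs_of_pos (hΓpos k)]
  simp only [habs]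
  set y := |x| with hy
  have hy0 : 0 ≤ y := abs_nonneg x
  have heven : Summable (fun m : ℕ => y ^ (2*m+3) / Real.Gamma (((2*m+3:ℕ):ℝ) * α + α)) := by
    refine Summable.of_nonneg_of_le
      (fun m => div_nonneg (pow_nonneg hy0 _) (hΓpos (2*m+3)).le) (fun m => ?_)
      ((Real.summable_pow_div_factorial (y^2)).mul_left (y^3))
    have hge : (m.factorial : ℝ) ≤ Real.Gamma (((2*m+3:ℕ):ℝ) * α + α) := by
      refine le_trans ?_ (myGamma_ge m _ ?_)
      · exact_mod_cast Nat.factorial_le (Nat.le_succ m)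
      · push_cast
        nlinarith [Nat.cast_nonneg (α := ℝ) m]
    have hfacpos : (0:ℝ) < m.factorial := by exact_mod_cast m.factorial_pos
    have hrw : y^3 * ((y^2) ^ m / m.factorial) = y ^ (2*m+3) / m.factorial := by ring
    rw [hrw]
    gcongr
  have hodd : Summable (fun m : ℕ => y ^ (2*m+4) / Real.Gamma (((2*m+4:ℕ):ℝ) * α + α)) := by
    refine Summable.of_nonneg_of_le
      (fun m => div_nonneg (pow_nonneg hy0 _) (hΓpos (2*m+4)).le) (fun m => ?_)
      ((Real.summable_pow_div_factorial (y^2)).mul_left (y^4))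
    have hge : (m.factorial : ℝ) ≤ Real.Gamma (((2*m+4:ℕ):ℝ) * α + α) := by
      refine le_trans ?_ (myGamma_ge m _ ?_)
      · exact_mod_cast Nat.factorial_le (Nat.le_succ m)
      · push_cast
        nlinarith [Nat.cast_nonneg (α := ℝ) m]
    have hfacpos : (0:ℝ) < m.factorial := by exact_mod_cast m.factorial_pos
    have hrw : y^4 * ((y^2) ^ m / m.factorial) = y ^ (2*m+4) / m.factorial := by ring
    rw [hrw]
    gcongr
  have h3 : Summable (fun j : ℕ => y ^ (j+3) / Real.Gamma (((j+3:ℕ):ℝ) * α + α)) := by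
    apply Summable.even_add_odd
    · convert heven using 3 with m <;> (push_cast; ring)
    · convert hodd using 3 with m <;> (push_cast; ring)
  exact (summable_nat_add_iff 3).mp h3

lemma myLower (α : ℝ) (hα0 : 1/2 < α) (hα1 : α < 1) :
    ∃ δ > 0, δ ≤ 1 ∧ ∀ x : ℝ, 0 ≤ x → x ≤ δ →
      1 / (2 * Real.Gamma α) ≤ mittagLeffler α α (-x) := by
  have hαpos : 0 < α := by linarith
  have hΓα : 0 < Real.Gamma α := Real.Gamma_pos_of_pos hαpos
  have hΓpos : ∀ k : ℕ, 0 < Real.Gamma ((k:ℝ) * α + α) := fun k =>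
    Real.Gamma_pos_of_pos (by positivity)
  have hMsum : Summable (fun k : ℕ => (1:ℝ) ^ (k+1) / Real.Gamma (((k+1:ℕ):ℝ) * α + α)) :=
    (summable_nat_add_iff (f := fun k : ℕ => (1:ℝ) ^ k / Real.Gamma ((k:ℝ) * α + α)) 1).mpr
      (mySummable α hα0 1)
  set M : ℝ := ∑' k : ℕ, (1:ℝ) ^ (k+1) / Real.Gamma (((k+1:ℕ):ℝ) * α + α) with hM
  have hM0 : 0 ≤ M := tsum_nonneg (fun k => div_nonneg (by positivity) (hΓpos (k+1)).le)
  refine ⟨min 1 (1 / (2 * Real.Gamma α * (M+1))), lt_min one_pos (by positivity),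
    min_le_left _ _, fun x hx0 hxδ => ?_⟩
  have hx1 : x ≤ 1 := hxδ.trans (min_le_left _ _)
  have hsum : Summable (fun k : ℕ => (-x) ^ k / Real.Gamma ((k:ℝ) * α + α)) :=
    mySummable α hα0 (-x)
  have htail : Summable (fun k : ℕ => (-x) ^ (k+1) / Real.Gamma (((k+1:ℕ):ℝ) * α + α)) := by
    exact (summable_nat_add_iff (f := fun k : ℕ => (-x) ^ k / Real.Gamma ((k:ℝ) * α + α)) 1).mpr hsum
  rw [mittagLeffler, Summable.tsum_eq_zero_add hsum]
  have h0 : (-x) ^ 0 / Real.Gamma ((0:ℕ) * α + α) = 1 / Real.Gamma α := by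
    norm_num
  rw [h0]
  have habs : |∑' k : ℕ, (-x) ^ (k+1) / Real.Gamma (((k+1):ℕ) * α + α)| ≤ x * M := by
    rw [← Real.norm_eq_abs]
    have hnorm : ∀ k : ℕ, |(-x) ^ (k+1) / Real.Gamma (((k+1):ℕ) * α + α)|
        = x ^ (k+1) / Real.Gamma (((k+1):ℕ) * α + α) := by
      intro k
      rw [abs_div, abs_pow, abs_neg, abs_of_nonneg hx0, abs_of_pos (hΓpos (k+1))]
    refine (norm_tsum_le_tsum_norm (htail.abs.congr (fun k => (Real.norm_eq_abs _).symm))).trans ?_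
    simp only [Real.norm_eq_abs]
    rw [tsum_congr hnorm]
    rw [hM, ← tsum_mul_left]
    refine Summable.tsum_le_tsum (fun k => ?_) (htail.abs.congr fun k => hnorm k) ?_
    · have hxk : x ^ (k+1) ≤ x := by
        calc x ^ (k+1) ≤ x ^ 1 := pow_le_pow_of_le_one hx0 hx1 (by omega)
        _ = x := pow_one x
      calc x ^ (k+1) / Real.Gamma (((k+1):ℕ) * α + α)
            ≤ x / Real.Gamma (((k+1):ℕ) * α + α) := by gcongr
          _ = x * ((1:ℝ)^(k+1) / Real.Gamma (((k+1):ℕ) * α + α)) := by rw [one_pow]; ring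
    · exact hMsum.mul_left x
  have hxM : x * M ≤ 1 / (2 * Real.Gamma α) := by
    have hδ2 : x ≤ 1 / (2 * Real.Gamma α * (M+1)) := hxδ.trans (min_le_right _ _)
    calc x * M ≤ (1 / (2 * Real.Gamma α * (M+1))) * M := by
          apply mul_le_mul_of_nonneg_right hδ2 hM0
      _ ≤ 1 / (2 * Real.Gamma α) := by
          rw [div_mul_eq_mul_div, one_mul, div_le_div_iff₀ (by positivity) (by positivity)]
          nlinarith [hΓα]
  have hneg := neg_abs_le (∑' k : ℕ, (-x) ^ (k+1) / Real.Gamma (((k+1):ℕ) * α + α))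
  have h2Γ : 1 / (2 * Real.Gamma α) = 1 / Real.Gamma α - 1 / (2 * Real.Gamma α) := by
    field_simp; ring
  linarith [habs, hneg]

theorem mittagLeffler_square_integral_lower (α T lam₁ : ℝ)
    (hα0 : 1/2 < α) (hα1 : α < 1) (hT : 0 < T) (hlam₁ : 0 < lam₁) :
    ∃ C > 0, ∀ lam : ℝ, lam₁ ≤ lam →
      C * lam⁻¹ ^ 2
        ≤ ∫ τ in (0:ℝ)..T, τ ^ (2*α - 2) * (mittagLeffler α α (-lam * τ ^ α)) ^ 2 := by
  have hαpos : 0 < α := by linarith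
  have hΓα : 0 < Real.Gamma α := Real.Gamma_pos_of_pos hαpos
  have h2α : (0:ℝ) < 2*α - 1 := by linarith
  have h2α2 : (-1:ℝ) < 2*α - 2 := by linarith
  obtain ⟨δ, hδpos, hδ1, hδ⟩ := myLower α hα0 hα1
  set q : ℝ := 2 - α⁻¹ with hq
  have hq0 : 0 < q := by
    have : α⁻¹ < 2 := by
      rw [inv_lt_iff_one_lt_mul₀ hαpos]; linarith
    simp [hq]; linarith
  set c₀ : ℝ := 1 / (4 * Real.Gamma α ^ 2 * (2*α - 1)) with hc₀
  have hc₀pos : 0 < c₀ := by positivity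
  refine ⟨min (c₀ * T ^ (2*α-1) * lam₁^2) (c₀ * δ ^ q * lam₁ ^ (α⁻¹)), ?_, ?_⟩
  · apply lt_min
    · have := Real.rpow_pos_of_pos hT (2*α-1); positivity
    · have h1 := Real.rpow_pos_of_pos hδpos q
      have h2 := Real.rpow_pos_of_pos hlam₁ α⁻¹
      positivity
  intro lam hlam
  have hlam0 : 0 < lam := lt_of_lt_of_le hlam₁ hlam
  set t₀ : ℝ := min T ((δ/lam) ^ (α⁻¹)) with ht₀
  have ht₀pos : 0 < t₀ := lt_min hT (Real.rpow_pos_of_pos (by positivity) _)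
  have ht₀T : t₀ ≤ T := min_le_left _ _
  -- measurability of the Mittag-Leffler composite
  have hmeasE : Measurable (fun τ : ℝ => mittagLeffler α α (-lam * τ ^ α)) := by
    apply measurable_of_tendsto_metrizable
      (f := fun n (τ : ℝ) => ∑ k ∈ Finset.range n, (-lam * τ ^ α) ^ k / Real.Gamma (k * α + α))
    · intro n
      apply Finset.measurable_sum
      intro k _
      fun_prop
    · rw [tendsto_pi_nhds]
      intro τ
      exact (mySummable α hα0 (-lam * τ ^ α)).hasSum.tendsto_sum_nat
  -- uniform bound on (0, T]
  set B : ℝ := ∑' k : ℕ, (lam * T ^ α) ^ k / Real.Gamma ((k:ℝ) * α + α) with hB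
  have hBbound : ∀ τ ∈ Ioc (0:ℝ) T, |mittagLeffler α α (-lam * τ ^ α)| ≤ B := by
    intro τ hτ
    have hτ0 : 0 < τ := hτ.1
    have hsum := mySummable α hα0 (-lam * τ ^ α)
    rw [mittagLeffler, ← Real.norm_eq_abs]
    refine (norm_tsum_le_tsum_norm (hsum.abs.congr (fun k => (Real.norm_eq_abs _).symm))).trans ?_
    simp only [Real.norm_eq_abs]
    refine Summable.tsum_le_tsum (fun k => ?_) (hsum.abs.congr (fun k => rfl)) (mySummable α hα0 _)
    have hΓpos : 0 < Real.Gamma ((k:ℝ) * α + α) := Real.Gamma_pos_of_pos (by positivity)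
    rw [abs_div, abs_pow, abs_of_pos hΓpos]
    gcongr
    calc |(-lam * τ ^ α)| = lam * τ ^ α := by
          rw [neg_mul, abs_neg, abs_mul, abs_of_pos hlam0,
            abs_of_nonneg (Real.rpow_nonneg hτ0.le α)]
      _ ≤ lam * T ^ α :=
          mul_le_mul_of_nonneg_left (Real.rpow_le_rpow hτ0.le hτ.2 hαpos.le) hlam0.le
  -- interval integrability on [0, T]
  have hint : IntervalIntegrable
      (fun τ => τ ^ (2*α - 2) * (mittagLeffler α α (-lam * τ ^ α)) ^ 2) volume 0 T := by
    have hg : IntervalIntegrable (fun τ : ℝ => B^2 * τ ^ (2*α-2)) volume 0 T :=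
      (intervalIntegral.intervalIntegrable_rpow' h2α2).const_mul _
    refine hg.mono_fun ?_ ?_
    · apply Measurable.aestronglyMeasurable
      apply Measurable.mul
      · fun_prop
      · exact hmeasE.pow_const 2
    · rw [uIoc_of_le hT.le]
      refine (ae_restrict_iff' measurableSet_Ioc).mpr (Filter.Eventually.of_forall ?_)
      intro τ hτ
      have hτ0 : 0 < τ := hτ.1
      have hτr : 0 ≤ τ ^ (2*α-2) := Real.rpow_nonneg hτ0.le _
      have hE := hBbound τ hτ
      have hB0 : 0 ≤ B := (abs_nonneg _).trans hE
      have hE2 : (mittagLeffler α α (-lam * τ ^ α)) ^ 2 ≤ B ^ 2 := by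
        rw [← sq_abs]
        exact pow_le_pow_left₀ (abs_nonneg _) hE 2
      simp only [Real.norm_eq_abs]
      rw [abs_of_nonneg (mul_nonneg hτr (sq_nonneg _)), abs_of_nonneg (mul_nonneg (sq_nonneg B) hτr)]
      calc τ ^ (2*α-2) * (mittagLeffler α α (-lam * τ ^ α)) ^ 2
          ≤ τ ^ (2*α-2) * B ^ 2 := by gcongr
        _ = B^2 * τ ^ (2*α-2) := by ring
  -- pointwise lower bound on [0, t₀]
  have hlow : ∀ τ ∈ Icc (0:ℝ) t₀,
      (1/(2*Real.Gamma α))^2 * τ ^ (2*α-2)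
        ≤ τ ^ (2*α-2) * (mittagLeffler α α (-lam * τ ^ α)) ^ 2 := by
    rintro τ ⟨hτ0, hτt₀⟩
    rcases eq_or_lt_of_le hτ0 with h0 | h0
    · rw [← h0, Real.zero_rpow (by intro h; apply absurd h; intro h'; linarith)]
      simp
    · have hτα : lam * τ ^ α ≤ δ := by
        have h1 : τ ≤ (δ/lam) ^ (α⁻¹) := hτt₀.trans (min_le_right _ _)
        have h2 : τ ^ α ≤ ((δ/lam) ^ (α⁻¹)) ^ α := Real.rpow_le_rpow h0.le h1 hαpos.le
        rw [← Real.rpow_mul (by positivity), inv_mul_cancel₀ (ne_of_gt hαpos),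
          Real.rpow_one] at h2
        calc lam * τ ^ α ≤ lam * (δ/lam) := by gcongr
          _ = δ := by field_simp
      have hE := hδ (lam * τ ^ α) (by positivity) hτα
      rw [← neg_mul] at hE
      have hE2 : (1/(2*Real.Gamma α))^2 ≤ (mittagLeffler α α (-lam * τ ^ α)) ^ 2 := by
        apply pow_le_pow_left₀ (by positivity) hE
      have hτr : 0 ≤ τ ^ (2*α-2) := Real.rpow_nonneg h0.le _
      calc (1/(2*Real.Gamma α))^2 * τ ^ (2*α-2)
          = τ ^ (2*α-2) * (1/(2*Real.Gamma α))^2 := by ring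
        _ ≤ τ ^ (2*α-2) * (mittagLeffler α α (-lam * τ ^ α)) ^ 2 := by gcongr
  -- chain of integral inequalities
  have hstep1 : ∫ τ in (0:ℝ)..t₀, (1/(2*Real.Gamma α))^2 * τ ^ (2*α-2)
      ≤ ∫ τ in (0:ℝ)..t₀, τ ^ (2*α-2) * (mittagLeffler α α (-lam * τ ^ α)) ^ 2 := by
    refine intervalIntegral.integral_mono_on ht₀pos.le
      ((intervalIntegral.intervalIntegrable_rpow' h2α2).const_mul _)
      (hint.mono_set ?_) hlow
    rw [uIcc_of_le ht₀pos.le, uIcc_of_le hT.le]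
    exact Icc_subset_Icc le_rfl ht₀T
  have hstep2 : ∫ τ in (0:ℝ)..t₀, τ ^ (2*α-2) * (mittagLeffler α α (-lam * τ ^ α)) ^ 2
      ≤ ∫ τ in (0:ℝ)..T, τ ^ (2*α-2) * (mittagLeffler α α (-lam * τ ^ α)) ^ 2 := by
    refine intervalIntegral.integral_mono_interval le_rfl ht₀pos.le ht₀T ?_ hint
    refine (ae_restrict_iff' measurableSet_Ioc).mpr (Filter.Eventually.of_forall ?_)
    intro τ hτ
    have : 0 ≤ τ ^ (2*α-2) := Real.rpow_nonneg hτ.1.le _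
    positivity
  have hval : ∫ τ in (0:ℝ)..t₀, (1/(2*Real.Gamma α))^2 * τ ^ (2*α-2)
      = c₀ * t₀ ^ (2*α-1) := by
    rw [intervalIntegral.integral_const_mul, integral_rpow (Or.inl h2α2)]
    have he : 2*α - 2 + 1 = 2*α - 1 := by ring
    rw [he, Real.zero_rpow (ne_of_gt h2α), sub_zero, hc₀]
    rw [div_pow, one_pow, div_mul_div_comm, one_mul, div_mul_eq_mul_div, one_mul, mul_comm]
    congr 1
    ring
  -- final arithmetic
  have hfinal : min (c₀ * T ^ (2*α-1) * lam₁^2) (c₀ * δ ^ q * lam₁ ^ (α⁻¹)) * lam⁻¹ ^ 2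
      ≤ c₀ * t₀ ^ (2*α-1) := by
    rcases min_cases T ((δ/lam) ^ (α⁻¹)) with ⟨heq, _⟩ | ⟨heq, _⟩
    · rw [ht₀, heq]
      have h1 : lam⁻¹ ^ 2 ≤ lam₁⁻¹ ^ 2 := by gcongr
      calc min (c₀ * T ^ (2*α-1) * lam₁^2) (c₀ * δ ^ q * lam₁ ^ (α⁻¹)) * lam⁻¹ ^ 2
          ≤ (c₀ * T ^ (2*α-1) * lam₁^2) * lam₁⁻¹ ^ 2 := by
            refine mul_le_mul (min_le_left _ _) h1 (by positivity) ?_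
            have := Real.rpow_pos_of_pos hT (2*α-1); positivity
        _ = c₀ * T ^ (2*α-1) := by field_simp
    · rw [ht₀, heq]
      have hrw : ((δ/lam) ^ (α⁻¹)) ^ (2*α-1) = δ ^ q / lam ^ q := by
        rw [← Real.rpow_mul (by positivity)]
        have : α⁻¹ * (2*α-1) = q := by
          rw [hq]; field_simp
        rw [this, Real.div_rpow hδpos.le hlam0.le]
      rw [hrw]
      have hmono : lam₁ ^ (α⁻¹) ≤ lam ^ (α⁻¹) :=
        Real.rpow_le_rpow hlam₁.le hlam (by positivity)
      have hl2 : lam ^ q * lam ^ (α⁻¹) = lam ^ (2:ℕ) := by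
        rw [← Real.rpow_add hlam0, ← Real.rpow_natCast lam 2]
        norm_num [hq]
      have hlq : 0 < lam ^ q := Real.rpow_pos_of_pos hlam0 q
      have hlinv : 0 < lam ^ (α⁻¹) := Real.rpow_pos_of_pos hlam0 _
      calc min (c₀ * T ^ (2*α-1) * lam₁^2) (c₀ * δ ^ q * lam₁ ^ (α⁻¹)) * lam⁻¹ ^ 2
          ≤ (c₀ * δ ^ q * lam ^ (α⁻¹)) * lam⁻¹ ^ 2 := by
            apply mul_le_mul_of_nonneg_right ((min_le_right _ _).trans ?_) (by positivity)
            gcongr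

        _ = c₀ * (δ ^ q / lam ^ q) := by
            rw [inv_pow, ← hl2]
            field_simp
  calc min (c₀ * T ^ (2*α-1) * lam₁^2) (c₀ * δ ^ q * lam₁ ^ (α⁻¹)) * lam⁻¹ ^ 2
      ≤ c₀ * t₀ ^ (2*α-1) := hfinal
    _ = ∫ τ in (0:ℝ)..t₀, (1/(2*Real.Gamma α))^2 * τ ^ (2*α-2) := hval.symm
    _ ≤ ∫ τ in (0:ℝ)..t₀, τ ^ (2*α-2) * (mittagLeffler α α (-lam * τ ^ α)) ^ 2 := hstep1
    _ ≤ ∫ τ in (0:ℝ)..T, τ ^ (2*α-2) * (mittagLeffler α α (-lam * τ ^ α)) ^ 2 := hstep2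
end
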